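/- Let φ : K → L be a geometric and dense morphism of ⊗-triangulated categories. Then the induced map Φ : Spc(L) → Spc(K), Φ(C) = ⋂ {H ⊗-thick in K : C ⊆ ⟨φ(H)⟩}, is continuous with respect to the topologies on Spc(L) and Spc(K) generated by the basic open sets U(-). -/

import Mathlib

namespace Balmer

open CategoryTheory CategoryTheory.Limits CategoryTheory.Pretriangulated ZeroObject

universe v u v' u'

variable {K : Type u} [Category.{v} K] [Preadditive K] [HasZeroObject K] [HasShift K ℤ]
  [∀ n : ℤ, (shiftFunctor K n).Additive] [Pretriangulated K] [HasBinaryBiproducts K]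

/-- A `⊗`-thick subcategory of `K` (identified with its set of objects):
a full triangulated subcategory, closed under isomorphisms, translations, cones and
direct summands, which is moreover an ideal for the tensor product on both sides. -/
def IsTensorThick (tensor : K ⥤ K ⥤ K) (S : Set K) : Prop :=
  (0 : K) ∈ S ∧
  (∀ ⦃a b : K⦄, (a ≅ b) → a ∈ S → b ∈ S) ∧
  (∀ a ∈ S, ∀ n : ℤ, (shiftFunctor K n).obj a ∈ S) ∧
  (∀ T ∈ (distTriang K), T.obj₁ ∈ S → T.obj₂ ∈ S → T.obj₃ ∈ S) ∧
  (∀ a b : K, (a ⊞ b) ∈ S → a ∈ S ∧ b ∈ S) ∧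
  (∀ a ∈ S, ∀ b : K, (tensor.obj a).obj b ∈ S ∧ (tensor.obj b).obj a ∈ S)

/-- `⟨D⟩`, the smallest `⊗`-thick subcategory of `K` containing `D`. -/
def tensorSpan (tensor : K ⥤ K ⥤ K) (D : Set K) : Set K :=
  ⋂₀ {S : Set K | IsTensorThick tensor S ∧ D ⊆ S}

/-- A `⊗`-thick subcategory `A` is atomic if whenever `A ⊆ ⟨D⟩` for a collection of
objects `D`, there is some `d ∈ D` with `A ⊆ ⟨d⟩`. -/
def IsAtomic (tensor : K ⥤ K ⥤ K) (A : Set K) : Prop :=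
  IsTensorThick tensor A ∧
    ∀ D : Set K, A ⊆ tensorSpan tensor D → ∃ d ∈ D, A ⊆ tensorSpan tensor {d}

/-- The spectrum `Spc(K,⊗)`: the collection of all nonzero atomic `⊗`-thick
subcategories of `K`. -/
def Spc (tensor : K ⥤ K ⥤ K) : Set (Set K) :=
  {A | IsAtomic tensor A ∧ ∃ a ∈ A, ¬ IsZero a}

/-- The basic subset `U(a) = {B ∈ Spc(K) | B ⊄ ⟨a⟩}`. -/
def SpcU (tensor : K ⥤ K ⥤ K) (a : K) : Set (Set K) :=
  {B ∈ Spc tensor | ¬ B ⊆ tensorSpan tensor {a}}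

/-- The spectrum as a type. -/
abbrev SpcTop (tensor : K ⥤ K ⥤ K) : Type u := {A : Set K // A ∈ Spc tensor}

/-- The topology on `Spc(K,⊗)` having the subsets `U(a)`, `a ∈ K`, as a basis of
open subsets. -/
instance spcTopology (tensor : K ⥤ K ⥤ K) : TopologicalSpace (SpcTop tensor) :=
  TopologicalSpace.generateFrom
    {V : Set (SpcTop tensor) | ∃ a : K, V = {B | ¬ B.1 ⊆ tensorSpan tensor {a}}}

variable {L : Type u'} [Category.{v'} L] [Preadditive L] [HasZeroObject L] [HasShift L ℤ]
  [∀ n : ℤ, (shiftFunctor L n).Additive] [Pretriangulated L] [HasBinaryBiproducts L]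

/-- A morphism `φ` of `⊗`-triangulated categories is geometric if `⟨φ(-)⟩`
commutes with arbitrary intersections of `⊗`-thick subcategories. -/
def IsGeometric (tensorK : K ⥤ K ⥤ K) (tensorL : L ⥤ L ⥤ L) (φ : K ⥤ L) : Prop :=
  ∀ 𝒞 : Set (Set K), (∀ C ∈ 𝒞, IsTensorThick tensorK C) →
    tensorSpan tensorL (φ.obj '' ⋂₀ 𝒞) = ⋂ C ∈ 𝒞, tensorSpan tensorL (φ.obj '' C)

/-- A morphism `φ` of `⊗`-triangulated categories is dense if `⟨φ(K)⟩ = L`. -/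
def IsDense (tensorL : L ⥤ L ⥤ L) (φ : K ⥤ L) : Prop :=
  tensorSpan tensorL (Set.range φ.obj) = Set.univ

/-- The map `Φ = Spc(φ)` underlying a geometric and dense morphism `φ`:
`Φ(C)` is the intersection of all `⊗`-thick subcategories `H ⊆ K` such that
`C ⊆ ⟨φ(H)⟩`. -/
def PhiMap (tensorK : K ⥤ K ⥤ K) (tensorL : L ⥤ L ⥤ L) (φ : K ⥤ L) (C : Set L) : Set K :=
  ⋂₀ {H : Set K | IsTensorThick tensorK H ∧ C ⊆ tensorSpan tensorL (φ.obj '' H)}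


section Aux

variable (tensor : K ⥤ K ⥤ K)

lemma isTensorThick_sInter {𝒞 : Set (Set K)} (h : ∀ S ∈ 𝒞, IsTensorThick tensor S) :
    IsTensorThick tensor (⋂₀ 𝒞) := by
  refine ⟨fun S hS => (h S hS).1,
    fun a b i ha S hS => (h S hS).2.1 i (ha S hS),
    fun a ha n S hS => (h S hS).2.2.1 a (ha S hS) n,
    fun T hT h1 h2 S hS => (h S hS).2.2.2.1 T hT (h1 S hS) (h2 S hS),
    fun a b hab => ⟨fun S hS => ((h S hS).2.2.2.2.1 a b (hab S hS)).1,
      fun S hS => ((h S hS).2.2.2.2.1 a b (hab S hS)).2⟩,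
    fun a ha b => ⟨fun S hS => ((h S hS).2.2.2.2.2 a (ha S hS) b).1,
      fun S hS => ((h S hS).2.2.2.2.2 a (ha S hS) b).2⟩⟩

lemma isTensorThick_tensorSpan (D : Set K) : IsTensorThick tensor (tensorSpan tensor D) :=
  isTensorThick_sInter tensor (fun _ hS => hS.1)

lemma subset_tensorSpan (D : Set K) : D ⊆ tensorSpan tensor D :=
  fun _ hd _ hS => hS.2 hd

lemma tensorSpan_min {D S : Set K} (h1 : IsTensorThick tensor S) (h2 : D ⊆ S) :
    tensorSpan tensor D ⊆ S :=
  fun _ hx => hx S ⟨h1, h2⟩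

lemma tensorSpan_mono {D E : Set K} (h : D ⊆ E) :
    tensorSpan tensor D ⊆ tensorSpan tensor E :=
  tensorSpan_min tensor (isTensorThick_tensorSpan tensor E)
    (h.trans (subset_tensorSpan tensor E))

end Aux

section Aux2

variable {L : Type u'} [Category.{v'} L] [Preadditive L] [HasZeroObject L] [HasShift L ℤ]
  [∀ n : ℤ, (shiftFunctor L n).Additive] [Pretriangulated L] [HasBinaryBiproducts L]

lemma isTensorThick_preimage (tensorK : K ⥤ K ⥤ K) (tensorL : L ⥤ L ⥤ L)
    (φ : K ⥤ L) [φ.CommShift ℤ] [φ.IsTriangulated]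
    (e : ∀ a b : K, φ.obj ((tensorK.obj a).obj b) ≅ (tensorL.obj (φ.obj a)).obj (φ.obj b))
    {S : Set L} (hS : IsTensorThick tensorL S) :
    IsTensorThick tensorK (φ.obj ⁻¹' S) := by
  haveI : Limits.PreservesBinaryBiproducts φ :=
    Limits.preservesBinaryBiproducts_of_preservesBiproducts φ
  obtain ⟨h0, hiso, hsh, htri, hsum, htens⟩ := hS
  refine ⟨hiso φ.mapZeroObject.symm h0,
    fun a b i ha => hiso (φ.mapIso i) ha,
    fun a ha n => hiso ((φ.commShiftIso n).app a).symm (hsh _ ha n),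
    fun T hT h1 h2 => htri _ (φ.map_distinguished T hT) h1 h2,
    fun a b hab => ?_,
    fun a ha b => ⟨hiso (e a b).symm ((htens _ ha (φ.obj b)).1),
      hiso (e b a).symm ((htens _ ha (φ.obj b)).2)⟩⟩
  have := hsum _ _ (hiso (φ.mapBiprod a b) hab)
  exact ⟨this.1, this.2⟩

end Aux2

/-- Proposition 4.8: the map `Φ : Spc(L) → Spc(K)` induced by a
geometric and dense morphism `φ : K ⥤ L` is continuous. -/
theorem stmt10 (tensorK : K ⥤ K ⥤ K) (tensorL : L ⥤ L ⥤ L)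
    [∀ a : K, (tensorK.obj a).CommShift ℤ] [∀ a : K, (tensorK.obj a).IsTriangulated]
    [∀ b : K, (tensorK.flip.obj b).CommShift ℤ] [∀ b : K, (tensorK.flip.obj b).IsTriangulated]
    [∀ a : L, (tensorL.obj a).CommShift ℤ] [∀ a : L, (tensorL.obj a).IsTriangulated]
    [∀ b : L, (tensorL.flip.obj b).CommShift ℤ] [∀ b : L, (tensorL.flip.obj b).IsTriangulated]
    (φ : K ⥤ L) [φ.CommShift ℤ] [φ.IsTriangulated]
    (e : ∀ a b : K, φ.obj ((tensorK.obj a).obj b) ≅ (tensorL.obj (φ.obj a)).obj (φ.obj b))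
    (hgeo : IsGeometric tensorK tensorL φ) (hdense : IsDense tensorL φ)
    (Φ : SpcTop tensorL → SpcTop tensorK)
    (hΦ : ∀ C : SpcTop tensorL, (Φ C).1 = PhiMap tensorK tensorL φ C.1) :
    Continuous Φ := by
  -- The key: Φ⁻¹ of a basic open set U(a) is the basic open set U(φ a).
  have key : ∀ (C : SpcTop tensorL) (a : K),
      ((Φ C).1 ⊆ tensorSpan tensorK {a}) ↔ C.1 ⊆ tensorSpan tensorL {φ.obj a} := by
    intro C a
    rw [hΦ]
    constructor
    · intro h
      -- Φ C itself belongs to the defining family, by geometricity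
      set 𝒞 : Set (Set K) := {H : Set K |
        IsTensorThick tensorK H ∧ C.1 ⊆ tensorSpan tensorL (φ.obj '' H)} with h𝒞
      have hthick : ∀ H ∈ 𝒞, IsTensorThick tensorK H := fun H hH => hH.1
      have hC : C.1 ⊆ tensorSpan tensorL (φ.obj '' (⋂₀ 𝒞)) := by
        rw [hgeo 𝒞 hthick]
        intro x hx
        simp only [Set.mem_iInter]
        intro H hH
        exact hH.2 hx
      -- φ '' ⟨a⟩ ⊆ ⟨{φ a}⟩
      have hsub : φ.obj '' (tensorSpan tensorK {a}) ⊆ tensorSpan tensorL {φ.obj a} := by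
        rintro _ ⟨x, hx, rfl⟩
        have : tensorSpan tensorK {a} ⊆ φ.obj ⁻¹' (tensorSpan tensorL {φ.obj a}) := by
          apply tensorSpan_min
          · exact isTensorThick_preimage tensorK tensorL φ e
              (isTensorThick_tensorSpan tensorL {φ.obj a})
          · intro y hy
            rw [Set.mem_singleton_iff] at hy
            rw [hy]
            exact subset_tensorSpan tensorL {φ.obj a} rfl
        exact this hx
      calc C.1 ⊆ tensorSpan tensorL (φ.obj '' (⋂₀ 𝒞)) := hC
        _ ⊆ tensorSpan tensorL (φ.obj '' (tensorSpan tensorK {a})) :=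
            tensorSpan_mono tensorL (Set.image_mono h)
        _ ⊆ tensorSpan tensorL (tensorSpan tensorL {φ.obj a}) :=
            tensorSpan_mono tensorL hsub
        _ ⊆ tensorSpan tensorL {φ.obj a} :=
            tensorSpan_min tensorL (isTensorThick_tensorSpan tensorL _) subset_rfl
    · intro h
      -- ⟨a⟩ belongs to the defining family
      have hmem : tensorSpan tensorK {a} ∈ {H : Set K |
          IsTensorThick tensorK H ∧ C.1 ⊆ tensorSpan tensorL (φ.obj '' H)} := by
        refine ⟨isTensorThick_tensorSpan tensorK _, h.trans (tensorSpan_mono tensorL ?_)⟩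
        rintro _ rfl
        exact ⟨a, subset_tensorSpan tensorK {a} rfl, rfl⟩
      exact fun x hx => hx _ hmem
  rw [continuous_generateFrom_iff]
  rintro V ⟨a, rfl⟩
  have : Φ ⁻¹' {B : SpcTop tensorK | ¬ B.1 ⊆ tensorSpan tensorK {a}} =
      {C : SpcTop tensorL | ¬ C.1 ⊆ tensorSpan tensorL {φ.obj a}} := by
    ext C
    simp only [Set.mem_preimage, Set.mem_setOf_eq, key C a]
  rw [this]
  exact TopologicalSpace.isOpen_generateFrom_of_mem ⟨φ.obj a, rfl⟩

end Balmer
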